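/- Stabilization of the Pareto tables: for every vertex v : V and every ℓ ≥ (card V) − 1, the Pareto table satisfies D ℓ v = D ((card V) − 1) v. -/

import Mathlib

open scoped NNReal

/-- A walk from `s` to `t`: a nonempty list of vertices starting at `s`,
ending at `t`, with `E u v` for every pair of consecutive vertices. -/
def IsWalk {V : Type*} (E : V → V → Prop) (s t : V) (l : List V) : Prop :=
  l ≠ [] ∧ l.head? = some s ∧ l.getLast? = some t ∧ l.Chain' E

/-- The multi-cost of a walk: componentwise sum of edge weights over
consecutive pairs of vertices (a walk with no edges has cost `0`). -/
def walkCost {V : Type*} {k : ℕ} (w : V → V → Fin k → ℝ≥0) (l : List V) :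
    Fin k → ℝ≥0 :=
  ((l.zip l.tail).map fun p => w p.1 p.2).sum

/-- The Pareto front: minimal elements of `S` w.r.t. the product order. -/
def paretoFront {k : ℕ} (S : Set (Fin k → ℝ≥0)) : Set (Fin k → ℝ≥0) :=
  {m | m ∈ S ∧ ¬ ∃ c ∈ S, c < m}

lemma paretoFront_subset {k : ℕ} (S : Set (Fin k → ℝ≥0)) : paretoFront S ⊆ S :=
  fun _ h => h.1

lemma exists_pareto_le {k : ℕ} {S : Set (Fin k → ℝ≥0)} (hS : S.Finite) {a}
    (ha : a ∈ S) : ∃ m ∈ paretoFront S, m ≤ a := by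
  obtain ⟨m, hm, hmin⟩ := Set.Finite.exists_minimal (s := {x ∈ S | x ≤ a})
    (hS.subset (fun x hx => hx.1)) ⟨a, ha, le_refl a⟩
  refine ⟨m, ⟨hm.1, ?_⟩, hm.2⟩
  rintro ⟨c, hc, hlt⟩
  exact absurd (hmin ⟨hc, hlt.le.trans hm.2⟩ hlt.le) (not_le_of_gt hlt)

lemma paretoFront_union_congr {k : ℕ} {A A' B : Set (Fin k → ℝ≥0)} (h1 : A' ⊆ A)
    (h2 : ∀ a ∈ A, ∃ a' ∈ A', a' ≤ a) :
    paretoFront (A' ∪ B) = paretoFront (A ∪ B) := by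
  have hsub : A' ∪ B ⊆ A ∪ B := Set.union_subset_union_left B h1
  have hdom : ∀ x ∈ A ∪ B, ∃ y ∈ A' ∪ B, y ≤ x := by
    rintro x (hx | hx)
    · obtain ⟨y, hy, hle⟩ := h2 x hx; exact ⟨y, Or.inl hy, hle⟩
    · exact ⟨x, Or.inr hx, le_refl x⟩
  ext m
  constructor
  · rintro ⟨hm, hnot⟩
    refine ⟨hsub hm, ?_⟩
    rintro ⟨c, hc, hlt⟩
    obtain ⟨y, hy, hle⟩ := hdom c hc
    exact hnot ⟨y, hy, lt_of_le_of_lt hle hlt⟩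
  · rintro ⟨hm, hnot⟩
    obtain ⟨y, hy, hle⟩ := hdom m hm
    have hym : y = m := by
      rcases eq_or_lt_of_le hle with h | h
      · exact h
      · exact absurd ⟨y, hsub hy, h⟩ hnot
    refine ⟨hym ▸ hy, ?_⟩
    rintro ⟨c, hc, hlt⟩
    exact hnot ⟨c, hsub hc, hlt⟩

lemma paretoFront_congr {k : ℕ} {A A' : Set (Fin k → ℝ≥0)} (h1 : A' ⊆ A)
    (h2 : ∀ a ∈ A, ∃ a' ∈ A', a' ≤ a) : paretoFront A' = paretoFront A := by
  have := paretoFront_union_congr (B := ∅) h1 h2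
  simpa using this

lemma walkCost_nil {V : Type*} {k : ℕ} (w : V → V → Fin k → ℝ≥0) :
    walkCost w [] = 0 := rfl

lemma walkCost_single {V : Type*} {k : ℕ} (w : V → V → Fin k → ℝ≥0) (a : V) :
    walkCost w [a] = 0 := rfl

lemma walkCost_cons_cons {V : Type*} {k : ℕ} (w : V → V → Fin k → ℝ≥0)
    (x a : V) (t : List V) :
    walkCost w (x :: a :: t) = w x a + walkCost w (a :: t) := by
  simp [walkCost]

lemma walkCost_append_cons {V : Type*} {k : ℕ} (w : V → V → Fin k → ℝ≥0) :
    ∀ (xs : List V) (y : V) (ys : List V),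
      walkCost w (xs ++ y :: ys) = walkCost w (xs ++ [y]) + walkCost w (y :: ys)
  | [], y, ys => by simp [walkCost_single]
  | [x], y, ys => by
      simp [walkCost_cons_cons, walkCost_single]
  | x :: x' :: xs, y, ys => by
      have ih := walkCost_append_cons w (x' :: xs) y ys
      simp only [List.cons_append, walkCost_cons_cons] at *
      rw [ih, add_assoc]

lemma walkCost_concat {V : Type*} {k : ℕ} (w : V → V → Fin k → ℝ≥0)
    (l : List V) (hl : l ≠ []) (v : V) :
    walkCost w (l ++ [v]) = walkCost w l + w (l.getLast hl) v := by
  obtain rfl | ⟨xs, u, rfl⟩ := l.eq_nil_or_concat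
  · exact absurd rfl hl
  · simp only [List.concat_eq_append]
    rw [List.append_assoc]
    show walkCost w (xs ++ u :: [v]) = _
    rw [walkCost_append_cons, walkCost_cons_cons, walkCost_single]
    simp [List.getLast_append]

/-- Costs of walks from `s` to `v` with at most `ℓ` edges. -/
def walkSet {V : Type*} (E : V → V → Prop) {k : ℕ} (w : V → V → Fin k → ℝ≥0)
    (s : V) (ℓ : ℕ) (v : V) : Set (Fin k → ℝ≥0) :=
  {x | ∃ l : List V, IsWalk E s v l ∧ l.length ≤ ℓ + 1 ∧ x = walkCost w l}

lemma walkSet_finite {V : Type*} [Finite V] (E : V → V → Prop) {k : ℕ}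
    (w : V → V → Fin k → ℝ≥0) (s : V) (ℓ : ℕ) (v : V) :
    (walkSet E w s ℓ v).Finite := by
  apply ((List.finite_length_le V (ℓ + 1)).image (walkCost w)).subset
  rintro x ⟨l, _, hlen, rfl⟩
  exact ⟨l, hlen, rfl⟩

lemma walkSet_zero_self {V : Type*} (E : V → V → Prop) {k : ℕ}
    (w : V → V → Fin k → ℝ≥0) (s : V) : walkSet E w s 0 s = {0} := by
  ext x
  constructor
  · rintro ⟨l, ⟨hne, hhead, hlast, _⟩, hlen, rfl⟩
    have : l.length = 1 := le_antisymm hlen (List.length_pos_iff.mpr hne)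
    obtain ⟨a, rfl⟩ := List.length_eq_one_iff.mp this
    simp [walkCost_single]
  · rintro rfl
    exact ⟨[s], ⟨by simp, rfl, rfl, List.isChain_singleton s⟩, by simp, rfl⟩

lemma walkSet_zero_ne {V : Type*} (E : V → V → Prop) {k : ℕ}
    (w : V → V → Fin k → ℝ≥0) (s v : V) (hv : v ≠ s) : walkSet E w s 0 v = ∅ := by
  ext x
  simp only [Set.mem_empty_iff_false, iff_false]
  rintro ⟨l, ⟨hne, hhead, hlast, _⟩, hlen, rfl⟩
  have : l.length = 1 := le_antisymm hlen (List.length_pos_iff.mpr hne)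
  obtain ⟨a, rfl⟩ := List.length_eq_one_iff.mp this
  simp only [List.head?_cons, Option.some.injEq] at hhead
  simp only [List.getLast?_singleton, Option.some.injEq] at hlast
  exact hv (hlast ▸ hhead)

lemma walkSet_succ {V : Type*} (E : V → V → Prop) {k : ℕ}
    (w : V → V → Fin k → ℝ≥0) (s : V) (ℓ : ℕ) (v : V) :
    walkSet E w s (ℓ + 1) v = walkSet E w s ℓ v ∪
      {x | ∃ u : V, E u v ∧ ∃ c ∈ walkSet E w s ℓ u, x = c + w u v} := by
  ext x
  constructor
  · rintro ⟨l, ⟨hne, hhead, hlast, hchain⟩, hlen, rfl⟩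
    rcases le_or_gt l.length (ℓ + 1) with h | h
    · exact Or.inl ⟨l, ⟨hne, hhead, hlast, hchain⟩, h, rfl⟩
    · right
      obtain rfl | ⟨l', b, rfl⟩ := l.eq_nil_or_concat
      · exact absurd rfl hne
      simp only [List.concat_eq_append] at *
      rw [List.getLast?_concat] at hlast
      obtain rfl : v = b := by injection hlast with h; exact h.symm
      have hl' : l' ≠ [] := by
        rintro rfl
        simp at h
      have hu' : l'.getLast? = some (l'.getLast hl') := List.getLast?_eq_getLast (l := l') hl'
      rw [List.Chain', List.isChain_append] at hchain
      obtain ⟨hc1, _, hc3⟩ := hchain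
      have hEuv : E (l'.getLast hl') v := hc3 (l'.getLast hl') hu' v rfl
      refine ⟨l'.getLast hl', hEuv, walkCost w l', ⟨l', ⟨hl', ?_, hu', hc1⟩, ?_, rfl⟩, ?_⟩
      · rw [List.head?_append] at hhead
        cases l' with
        | nil => exact absurd rfl hl'
        | cons a t => simpa using hhead
      · simp only [List.length_append, List.length_singleton] at hlen h ⊢
        omega
      · rw [walkCost_concat w l' hl' v]
  · rintro (⟨l, hw, hlen, rfl⟩ | ⟨u, hE, c, ⟨l, ⟨hne, hhead, hlast, hchain⟩, hlen, rfl⟩, rfl⟩)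
    · exact ⟨l, hw, by omega, rfl⟩
    · refine ⟨l ++ [v], ⟨by simp, ?_, List.getLast?_concat (l := l), ?_⟩, ?_, ?_⟩
      · rw [List.head?_append]
        cases l with
        | nil => exact absurd rfl hne
        | cons a t => simpa using hhead
      · rw [List.Chain', List.isChain_append]
        refine ⟨hchain, List.isChain_singleton v, ?_⟩
        intro x hx y hy
        rw [hlast] at hx
        simp only [List.head?_cons, Option.mem_def, Option.some.injEq] at hx hy
        exact hx ▸ hy ▸ hE
      · simp only [List.length_append, List.length_singleton]
        omega
      · have hgl : l.getLast hne = u := by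
          have := List.getLast?_eq_getLast (l := l) hne
          rw [hlast] at this
          injection this with h
          exact h.symm
        rw [walkCost_concat w l hne v, hgl]

lemma head?_append_cons {V : Type*} (p : List V) (a : V) (q q' : List V) :
    (p ++ a :: q).head? = (p ++ a :: q').head? := by
  cases p <;> simp

lemma getLast?_append_cons {V : Type*} (p : List V) (a : V) (q : List V) :
    (p ++ a :: q).getLast? = (a :: q).getLast? := by
  rw [List.getLast?_append]
  rw [List.getLast?_eq_getLast (l := a :: q) (by simp)]
  rfl

lemma exists_short_walk {V : Type*} [Fintype V] (E : V → V → Prop) {k : ℕ}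
    (w : V → V → Fin k → ℝ≥0) (s v : V) :
    ∀ (n : ℕ) (l : List V), l.length ≤ n → IsWalk E s v l →
      ∃ l', IsWalk E s v l' ∧ l'.length ≤ Fintype.card V ∧
        walkCost w l' ≤ walkCost w l := by
  intro n
  induction n with
  | zero =>
    intro l hlen hw
    exact absurd (List.length_eq_zero_iff.mp (Nat.le_zero.mp hlen)) hw.1
  | succ n ih =>
    intro l hlen hw
    rcases le_or_gt l.length (Fintype.card V) with h | h
    · exact ⟨l, hw, h, le_rfl⟩
    · have hnd : ¬ l.Nodup := fun hnd => absurd hnd.length_le_card (by omega)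
      rw [List.nodup_iff_sublist] at hnd
      push_neg at hnd
      obtain ⟨a, ha⟩ := hnd
      rw [List.cons_sublist_iff] at ha
      obtain ⟨r₁, r₂, rfl, ha1, ha2⟩ := ha
      rw [List.singleton_sublist] at ha2
      obtain ⟨p, q, rfl⟩ := List.append_of_mem ha1
      obtain ⟨p', q', rfl⟩ := List.append_of_mem ha2
      have hl : (p ++ a :: q) ++ (p' ++ a :: q') =
          p ++ a :: ((q ++ p') ++ a :: q') := by simp
      rw [hl] at hlen h hw ⊢
      set m : List V := (q ++ p') with hm
      obtain ⟨hne, hhead, hlast, hchain⟩ := hw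
      have hw' : IsWalk E s v (p ++ a :: q') := by
        refine ⟨by simp, ?_, ?_, ?_⟩
        · rw [head?_append_cons p a q' (m ++ a :: q')]
          exact hhead
        · rw [getLast?_append_cons]
          rw [getLast?_append_cons, show a :: (m ++ a :: q') = (a :: m) ++ a :: q' by simp,
            getLast?_append_cons] at hlast
          exact hlast
        · rw [show p ++ a :: (m ++ a :: q') = p ++ ((a :: m) ++ a :: q') by simp,
            List.Chain', List.isChain_append] at hchain
          obtain ⟨h1, h2, h3⟩ := hchain
          rw [List.isChain_append] at h2
          rw [show p ++ a :: q' = p ++ (a :: q' : List V) by simp, List.Chain', List.isChain_append]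
          refine ⟨h1, h2.2.1, ?_⟩
          intro x hx y hy
          refine h3 x hx y ?_
          simpa using hy
      have hcost : walkCost w (p ++ a :: q') ≤ walkCost w (p ++ a :: (m ++ a :: q')) := by
        have e1 : walkCost w (p ++ a :: (m ++ a :: q')) =
            walkCost w (p ++ [a]) + walkCost w (a :: (m ++ a :: q')) :=
          walkCost_append_cons w p a (m ++ a :: q')
        have e2 : walkCost w (a :: (m ++ a :: q')) =
            walkCost w ((a :: m) ++ [a]) + walkCost w (a :: q') := by
          rw [show a :: (m ++ a :: q') = (a :: m) ++ a :: q' by simp]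
          exact walkCost_append_cons w (a :: m) a q'
        have e3 : walkCost w (p ++ a :: q') =
            walkCost w (p ++ [a]) + walkCost w (a :: q') :=
          walkCost_append_cons w p a q'
        rw [e1, e2, e3]
        apply add_le_add_right
        exact self_le_add_left _ _
      have hlen' : (p ++ a :: q').length ≤ n := by
        simp only [List.length_append, List.length_cons] at hlen ⊢
        omega
      obtain ⟨l', hw'', hlen'', hcost'⟩ := ih (p ++ a :: q') hlen' hw'
      exact ⟨l', hw'', hlen'', hcost'.trans hcost⟩

lemma D_eq_pareto {V : Type*} [Fintype V] (E : V → V → Prop) {k : ℕ}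
    (w : V → V → Fin k → ℝ≥0) (s : V) (D : ℕ → V → Set (Fin k → ℝ≥0))
    (hD0s : D 0 s = {0})
    (hD0 : ∀ v : V, v ≠ s → D 0 v = ∅)
    (hDstep : ∀ (ℓ : ℕ) (v : V), D (ℓ + 1) v =
      paretoFront (D ℓ v ∪ {x | ∃ u : V, E u v ∧ ∃ c ∈ D ℓ u, x = c + w u v})) :
    ∀ (ℓ : ℕ) (v : V), D ℓ v = paretoFront (walkSet E w s ℓ v) := by
  intro ℓ
  induction ℓ with
  | zero =>
    intro v
    by_cases hv : v = s
    · subst hv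
      rw [hD0s, walkSet_zero_self]
      ext x
      constructor
      · rintro rfl
        refine ⟨rfl, ?_⟩
        rintro ⟨c, hc, hlt⟩
        rw [Set.mem_singleton_iff] at hc
        subst hc
        exact lt_irrefl _ hlt
      · rintro ⟨h, _⟩
        exact h
    · rw [hD0 v hv, walkSet_zero_ne E w s v hv]
      ext x; simp [paretoFront]
  | succ ℓ ih =>
    intro v
    rw [hDstep, walkSet_succ]
    have hWfin : ∀ u, (walkSet E w s ℓ u).Finite := walkSet_finite E w s ℓ
    have step1 : paretoFront (D ℓ v ∪ {x | ∃ u : V, E u v ∧ ∃ c ∈ D ℓ u, x = c + w u v}) =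
        paretoFront (walkSet E w s ℓ v ∪ {x | ∃ u : V, E u v ∧ ∃ c ∈ D ℓ u, x = c + w u v}) := by
      apply paretoFront_union_congr
      · rw [ih v]; exact paretoFront_subset _
      · intro a ha
        obtain ⟨m, hm, hle⟩ := exists_pareto_le (hWfin v) ha
        exact ⟨m, by rw [ih v]; exact hm, hle⟩
    have step2 : paretoFront (walkSet E w s ℓ v ∪ {x | ∃ u : V, E u v ∧ ∃ c ∈ D ℓ u, x = c + w u v}) =
        paretoFront (walkSet E w s ℓ v ∪
          {x | ∃ u : V, E u v ∧ ∃ c ∈ walkSet E w s ℓ u, x = c + w u v}) := by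
      rw [Set.union_comm (walkSet E w s ℓ v), Set.union_comm (walkSet E w s ℓ v)]
      apply paretoFront_union_congr
      · rintro x ⟨u, hE, c, hc, rfl⟩
        refine ⟨u, hE, c, ?_, rfl⟩
        rw [ih u] at hc
        exact paretoFront_subset _ hc
      · rintro x ⟨u, hE, c, hc, rfl⟩
        obtain ⟨m, hm, hle⟩ := exists_pareto_le (hWfin u) hc
        exact ⟨m + w u v, ⟨u, hE, m, by rw [ih u]; exact hm, rfl⟩, add_le_add_left hle _⟩
    rw [step1, step2]


/-- stabilization of the Pareto tables: for every vertex `v`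
and every `ℓ ≥ card V - 1`, `D ℓ v = D (card V - 1) v`. -/
theorem paretoTable_stabilizes {V : Type*} [Fintype V]
    (E : V → V → Prop) [DecidableRel E] {k : ℕ} (w : V → V → Fin k → ℝ≥0)
    (s : V) (D : ℕ → V → Set (Fin k → ℝ≥0))
    (hD0s : D 0 s = {0})
    (hD0 : ∀ v : V, v ≠ s → D 0 v = ∅)
    (hDstep : ∀ (ℓ : ℕ) (v : V), D (ℓ + 1) v =
      paretoFront (D ℓ v ∪ {x | ∃ u : V, E u v ∧ ∃ c ∈ D ℓ u, x = c + w u v})) :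
    ∀ (v : V) (ℓ : ℕ), Fintype.card V - 1 ≤ ℓ →
      D ℓ v = D (Fintype.card V - 1) v := by
  intro v ℓ hℓ
  have hcard : 1 ≤ Fintype.card V := Fintype.card_pos_iff.mpr ⟨s⟩
  set N := Fintype.card V - 1 with hN
  have hDW := D_eq_pareto E w s D hD0s hD0 hDstep
  have crux : ∀ u, D (N + 1) u = D N u := by
    intro u
    rw [hDW, hDW]
    refine Eq.symm (paretoFront_congr ?_ ?_)
    · rintro x ⟨l, hwk, hlen, rfl⟩
      exact ⟨l, hwk, by omega, rfl⟩
    · rintro x ⟨l, hwk, hlen, rfl⟩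
      obtain ⟨l', hw', hlen', hcost'⟩ := exists_short_walk E w s u (N + 1 + 1) l hlen hwk
      exact ⟨walkCost w l', ⟨l', hw', by omega, rfl⟩, hcost'⟩
  have main : ∀ m, N ≤ m → ∀ u, D m u = D N u := by
    intro m hm
    induction m, hm using Nat.le_induction with
    | base => intro u; rfl
    | succ m hm ih =>
      intro u
      rw [hDstep m u]
      calc paretoFront (D m u ∪ {x | ∃ u' : V, E u' u ∧ ∃ c ∈ D m u', x = c + w u' u})
          = paretoFront (D N u ∪ {x | ∃ u' : V, E u' u ∧ ∃ c ∈ D N u', x = c + w u' u}) := by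
            simp_rw [ih]
        _ = D (N + 1) u := (hDstep N u).symm
        _ = D N u := crux u
  exact main ℓ hℓ v
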